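/- For each q ≥ 0, limsup_{d→∞} |c_{d,q}|^{1/d} ≤ 729; equivalently, the complex power series Σ_{d≥0} c_{d,q}·z^d has radius of convergence at least 3^{−6} = 1/729. In particular, the formal solutions of the Picard–Fuchs equation built from these coefficients converge in a neighborhood of the large complex structure limit. -/

import Mathlib

open scoped ENNReal

/-- `a_d(w) = (∏_{r=1}^{3d} (3w+r)²) / (∏_{r=1}^{d} (w+r)⁶)`. -/
noncomputable def aFun (d : ℕ) (w : ℂ) : ℂ :=
  (∏ r ∈ Finset.Icc 1 (3 * d), (3 * w + (r : ℂ)) ^ 2) /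
    (∏ r ∈ Finset.Icc 1 d, (w + (r : ℂ)) ^ 6)

/-- `c_{d,q} = (1/q!)·(d/dw)^q a_d(w)|_{w=0}`, the `q`-th Taylor coefficient of `a_d` at `0`. -/
noncomputable def cCoef (d q : ℕ) : ℂ :=
  iteratedDeriv q (aFun d) 0 / (q.factorial : ℂ)


open scoped NNReal

lemma fact3 : ∀ d : ℕ, (3*d).factorial ≤ 27^d * d.factorial^3 := by
  intro d
  induction d with
  | zero => simp
  | succ n ih =>
    have e1 : 3 * (n+1) = (3*n+2) + 1 := by ring
    have e2 : 3*n+2 = (3*n+1)+1 := by ring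
    have e3 : 3*n+1 = (3*n)+1 := by ring
    rw [e1, Nat.factorial_succ, e2, Nat.factorial_succ, e3, Nat.factorial_succ]
    have key : ((3*n+2)+1) * (((3*n+1)+1) * (((3*n)+1) * (3*n).factorial))
        ≤ (3*(n+1))^3 * (3*n).factorial := by
      have h1 : (3*n+2)+1 ≤ 3*(n+1) := by omega
      have h2 : (3*n+1)+1 ≤ 3*(n+1) := by omega
      have h3 : (3*n)+1 ≤ 3*(n+1) := by omega
      calc ((3*n+2)+1) * (((3*n+1)+1) * (((3*n)+1) * (3*n).factorial))
          ≤ (3*(n+1)) * ((3*(n+1)) * ((3*(n+1)) * (3*n).factorial)) :=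
            Nat.mul_le_mul h1 (Nat.mul_le_mul h2 (Nat.mul_le_mul_right _ h3))
        _ = (3*(n+1))^3 * (3*n).factorial := by ring
    refine le_trans key ?_
    calc (3*(n+1))^3 * (3*n).factorial ≤ (3*(n+1))^3 * (27^n * n.factorial^3) :=
          Nat.mul_le_mul_left _ ih
      _ = 27^(n+1) * ((n+1)*n.factorial)^3 := by ring
      _ = 27^(n+1) * (n+1).factorial^3 := by rw [Nat.factorial_succ]

lemma prod_Icc_cast (n : ℕ) : (∏ r ∈ Finset.Icc 1 n, (r:ℝ)) = n.factorial := by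
  rw [← Nat.cast_prod]
  congr 1
  rw [← Finset.Ico_add_one_right_eq_Icc]
  exact Finset.prod_Ico_id_eq_factorial n


lemma prod_lin (n k : ℕ) (c : ℝ) :
    (∏ r ∈ Finset.Icc 1 n, ((r:ℝ)*c)^k) = ((n.factorial : ℝ) * c^n)^k := by
  rw [Finset.prod_pow, Finset.prod_mul_distrib, Finset.prod_const, Nat.card_Icc, prod_Icc_cast]
  simp

open Metric in
lemma cauchy_est (f : ℂ → ℂ) (ρ : ℝ≥0) (hρ : 0 < ρ)
    (hf : DifferentiableOn ℂ f (closedBall 0 ρ)) (M : ℝ)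
    (hM : ∀ w ∈ closedBall (0:ℂ) (ρ:ℝ), ‖f w‖ ≤ M) (q : ℕ) :
    ‖iteratedDeriv q f 0‖ ≤ q.factorial * (M * (ρ:ℝ)⁻¹ ^ q) := by
  have h := hf.hasFPowerSeriesOnBall hρ
  have h1 : iteratedDeriv q f 0 = q.factorial • (cauchyPowerSeries f 0 ρ q fun _ => (1:ℂ)) := by
    rw [iteratedDeriv_eq_iteratedFDeriv, ← h.factorial_smul (1:ℂ) q]
  have hM0 : 0 ≤ M := le_trans (norm_nonneg _) (hM 0 (by simp [hρ.le]))
  have hint : ∀ θ ∈ Set.Icc (0:ℝ) (2*Real.pi), ‖f (circleMap 0 ρ θ)‖ ≤ M := by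
    intro θ _
    exact hM _ (sphere_subset_closedBall (circleMap_mem_sphere (0:ℂ) ρ.coe_nonneg θ))
  have hcont : Continuous fun θ : ℝ => ‖f (circleMap 0 ρ θ)‖ := by
    refine (hf.continuousOn.comp_continuous (continuous_circleMap 0 ρ) ?_).norm
    exact fun θ => sphere_subset_closedBall (circleMap_mem_sphere (0:ℂ) ρ.coe_nonneg θ)
  have hI : (∫ θ : ℝ in (0)..2 * Real.pi, ‖f (circleMap 0 ρ θ)‖) ≤ 2 * Real.pi * M := by
    calc (∫ θ : ℝ in (0)..2 * Real.pi, ‖f (circleMap 0 ρ θ)‖)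
        ≤ ∫ _ : ℝ in (0)..2 * Real.pi, M := by
          apply intervalIntegral.integral_mono_on Real.two_pi_pos.le
            (hcont.intervalIntegrable _ _) (intervalIntegrable_const) hint
      _ = 2 * Real.pi * M := by simp [mul_comm]
  have h2 : ‖cauchyPowerSeries f 0 ρ q‖ ≤ M * (ρ:ℝ)⁻¹ ^ q := by
    refine le_trans (norm_cauchyPowerSeries_le f 0 ρ q) ?_
    rw [abs_of_nonneg ρ.coe_nonneg]
    gcongr
    rw [inv_mul_le_iff₀ Real.two_pi_pos]
    linarith [hI]
  calc ‖iteratedDeriv q f 0‖ = q.factorial * ‖cauchyPowerSeries f 0 ρ q fun _ => (1:ℂ)‖ := by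
        rw [h1, nsmul_eq_mul, norm_mul]; simp
    _ ≤ q.factorial * ‖cauchyPowerSeries f 0 ρ q‖ := by
        gcongr
        refine le_trans ((cauchyPowerSeries f 0 ρ q).le_opNorm _) ?_
        simp
    _ ≤ q.factorial * (M * (ρ:ℝ)⁻¹ ^ q) := by gcongr

lemma aFun_diff (d : ℕ) (ρ : ℝ) (h2 : ρ ≤ 1/2) :
    DifferentiableOn ℂ (aFun d) (Metric.closedBall 0 ρ) := by
  apply DifferentiableOn.div
  · apply DifferentiableOn.fun_finsetProd
    intro r _
    exact (((differentiable_fun_id.const_mul 3).add_const _).pow 2).differentiableOn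
  · apply DifferentiableOn.fun_finsetProd
    intro r _
    exact ((differentiable_fun_id.add_const _).pow 6).differentiableOn
  · intro x hx
    rw [Finset.prod_ne_zero_iff]
    intro r hr
    apply pow_ne_zero
    intro hxr
    have hr1 : (1:ℝ) ≤ r := by exact_mod_cast (Finset.mem_Icc.mp hr).1
    have hx' : ‖x‖ ≤ ρ := by simpa using Metric.mem_closedBall.mp hx
    have : ‖(r:ℂ)‖ ≤ ‖x + (r:ℂ)‖ + ‖x‖ := by
      calc ‖(r:ℂ)‖ = ‖(x + (r:ℂ)) + (-x)‖ := by ring_nf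
        _ ≤ ‖x + (r:ℂ)‖ + ‖(-x)‖ := norm_add_le _ _
        _ = ‖x + (r:ℂ)‖ + ‖x‖ := by rw [norm_neg]
    rw [hxr] at this
    simp only [norm_zero, zero_add] at this
    have : ‖(r:ℂ)‖ = (r:ℝ) := by simp
    linarith [this ▸ ‹‖(r:ℂ)‖ ≤ ‖x‖›]

lemma sup_bound (d : ℕ) (ρ : ℝ) (h0 : 0 < ρ) (h2 : ρ ≤ 1/2) (w : ℂ) (hw : ‖w‖ ≤ ρ) :
    ‖aFun d w‖ ≤ (729 * ((1+3*ρ)/(1-ρ))^6)^d := by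
  have hρ1 : (0:ℝ) < 1 - ρ := by linarith
  have h13 : (0:ℝ) < 1 + 3*ρ := by linarith
  -- numerator bound
  have hnum : ‖∏ r ∈ Finset.Icc 1 (3*d), (3 * w + (r:ℂ))^2‖
      ≤ (((3*d).factorial : ℝ) * (1+3*ρ)^(3*d))^2 := by
    rw [norm_prod]
    have hb : ∀ r ∈ Finset.Icc 1 (3*d), ‖(3 * w + (r:ℂ))^2‖ ≤ ((r:ℝ) * (1+3*ρ))^2 := by
      intro r hr
      have hr1 : (1:ℝ) ≤ r := by exact_mod_cast (Finset.mem_Icc.mp hr).1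
      have hb : ‖3 * w + (r:ℂ)‖ ≤ (r:ℝ) * (1+3*ρ) := by
        calc ‖3 * w + (r:ℂ)‖ ≤ ‖(3:ℂ) * w‖ + ‖(r:ℂ)‖ := norm_add_le _ _
          _ = 3 * ‖w‖ + r := by simp [norm_mul]
          _ ≤ 3 * ρ + r := by linarith
          _ ≤ (r:ℝ) * (1+3*ρ) := by nlinarith
      calc ‖(3 * w + (r:ℂ))^2‖ = ‖3 * w + (r:ℂ)‖^2 := by rw [norm_pow]
        _ ≤ ((r:ℝ) * (1+3*ρ))^2 := pow_le_pow_left₀ (norm_nonneg _) hb 2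
    refine le_trans (Finset.prod_le_prod (fun r _ => norm_nonneg _) hb) ?_
    rw [prod_lin]
  -- denominator bound
  have hden : (((d.factorial : ℝ)) * (1-ρ)^d)^6
      ≤ ‖∏ r ∈ Finset.Icc 1 d, (w + (r:ℂ))^6‖ := by
    rw [norm_prod]
    have hb : ∀ r ∈ Finset.Icc 1 d, ((r:ℝ) * (1-ρ))^6 ≤ ‖(w + (r:ℂ))^6‖ := by
      intro r hr
      have hr1 : (1:ℝ) ≤ r := by exact_mod_cast (Finset.mem_Icc.mp hr).1
      have hb : (r:ℝ) * (1-ρ) ≤ ‖w + (r:ℂ)‖ := by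
        have htri : ‖(r:ℂ)‖ ≤ ‖w + (r:ℂ)‖ + ‖w‖ := by
          calc ‖(r:ℂ)‖ = ‖(w + (r:ℂ)) + (-w)‖ := by ring_nf
            _ ≤ ‖w + (r:ℂ)‖ + ‖(-w)‖ := norm_add_le _ _
            _ = ‖w + (r:ℂ)‖ + ‖w‖ := by rw [norm_neg]
        have : ‖(r:ℂ)‖ = (r:ℝ) := by simp
        nlinarith
      calc ((r:ℝ) * (1-ρ))^6 ≤ ‖w + (r:ℂ)‖^6 :=
            pow_le_pow_left₀ (by positivity) hb 6
        _ = ‖(w + (r:ℂ))^6‖ := (norm_pow _ _).symm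
    refine le_trans ?_ (Finset.prod_le_prod (fun r _ => by positivity) hb)
    rw [prod_lin]
  have hf : (((3*d).factorial:ℝ))^2 ≤ 729^d * ((d.factorial:ℝ))^6 := by
    have h := fact3 d
    have h' : (((3*d).factorial:ℝ)) ≤ 27^d * ((d.factorial:ℝ))^3 := by exact_mod_cast h
    calc (((3*d).factorial:ℝ))^2 ≤ (27^d * ((d.factorial:ℝ))^3)^2 :=
          pow_le_pow_left₀ (by positivity) h' 2
      _ = 729^d * ((d.factorial:ℝ))^6 := by
          rw [mul_pow, ← pow_mul, ← pow_mul, mul_comm d 2, pow_mul]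
          norm_num
  have hBden : (0:ℝ) < (((d.factorial:ℝ)) * (1-ρ)^d)^6 := by positivity
  calc ‖aFun d w‖ = ‖∏ r ∈ Finset.Icc 1 (3*d), (3 * w + (r:ℂ))^2‖ /
        ‖∏ r ∈ Finset.Icc 1 d, (w + (r:ℂ))^6‖ := by rw [aFun, norm_div]
    _ ≤ (((3*d).factorial : ℝ) * (1+3*ρ)^(3*d))^2 / (((d.factorial : ℝ)) * (1-ρ)^d)^6 :=
        div_le_div₀ (by positivity) hnum hBden hden
    _ = ((((3*d).factorial:ℝ))^2 / ((d.factorial:ℝ))^6) * ((1+3*ρ)^(3*d*2) / (1-ρ)^(d*6)) := by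
        rw [mul_pow, mul_pow, ← pow_mul, ← pow_mul, div_mul_div_comm]
    _ ≤ 729^d * ((1+3*ρ)^(3*d*2) / (1-ρ)^(d*6)) := by
        apply mul_le_mul_of_nonneg_right _ (by positivity)
        rw [div_le_iff₀ (by positivity)]
        calc (((3*d).factorial:ℝ))^2 ≤ 729^d * ((d.factorial:ℝ))^6 := hf
          _ = 729^d * ((d.factorial:ℝ))^6 := rfl
    _ = (729 * ((1+3*ρ)/(1-ρ))^6)^d := by
        rw [mul_pow, ← pow_mul, div_pow,
          show 3*d*2 = 6*d by ring, show d*6 = 6*d by ring]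

lemma cCoef_bound (q d : ℕ) (ρ : ℝ) (h0 : 0 < ρ) (h2 : ρ ≤ 1/2) :
    ‖cCoef d q‖ ≤ ρ⁻¹^q * (729 * ((1+3*ρ)/(1-ρ))^6)^d := by
  set R : ℝ≥0 := ⟨ρ, h0.le⟩ with hR
  have hR0 : (0:ℝ≥0) < R := by exact_mod_cast h0
  have hRρ : (R:ℝ) = ρ := rfl
  have hM : ∀ w ∈ Metric.closedBall (0:ℂ) (R:ℝ), ‖aFun d w‖ ≤ (729 * ((1+3*ρ)/(1-ρ))^6)^d := by
    intro w hw
    exact sup_bound d ρ h0 h2 w (by simpa [hRρ] using Metric.mem_closedBall.mp hw)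
  have h := cauchy_est (aFun d) R hR0 (by rw [hRρ]; exact aFun_diff d ρ h2) _ hM q
  rw [hRρ] at h
  have hq : (0:ℝ) < q.factorial := by exact_mod_cast q.factorial_pos
  calc ‖cCoef d q‖ = ‖iteratedDeriv q (aFun d) 0‖ / q.factorial := by
        rw [cCoef, norm_div]; simp
    _ ≤ (q.factorial * ((729 * ((1+3*ρ)/(1-ρ))^6)^d * ρ⁻¹ ^ q)) / q.factorial := by
        apply div_le_div_of_nonneg_right ?_ hq.le
        exact h.trans (le_of_eq (by ring))
    _ = ρ⁻¹^q * (729 * ((1+3*ρ)/(1-ρ))^6)^d := by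
        rw [mul_div_cancel_left₀ _ (ne_of_gt hq), mul_comm]

lemma exists_rho (B : ℝ) (hB : 729 < B) :
    ∃ ρ : ℝ, 0 < ρ ∧ ρ ≤ 1/2 ∧ 729 * ((1+3*ρ)/(1-ρ))^6 ≤ B := by
  have hc : ContinuousAt (fun ρ : ℝ => 729 * ((1+3*ρ)/(1-ρ))^6) 0 := by
    apply ContinuousAt.mul continuousAt_const
    apply ContinuousAt.pow
    apply ContinuousAt.div
    · fun_prop
    · fun_prop
    · norm_num
  have h0 : (fun ρ : ℝ => 729 * ((1+3*ρ)/(1-ρ))^6) 0 = 729 := by norm_num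
  have hev : ∀ᶠ ρ in nhds (0:ℝ), 729 * ((1+3*ρ)/(1-ρ))^6 < B := by
    have ht := hc.tendsto
    simp only [h0] at ht
    exact ht.eventually_lt_const hB
  rw [Metric.eventually_nhds_iff] at hev
  obtain ⟨ε, hε, hball⟩ := hev
  refine ⟨min (ε/2) (1/2), by positivity, min_le_right _ _, ?_⟩
  have : |min (ε/2) (1/2) - 0| < ε := by
    rw [sub_zero, abs_of_pos (by positivity)]
    calc min (ε/2) (1/2) ≤ ε/2 := min_le_left _ _
      _ < ε := by linarith
  exact (hball this).le

lemma cCoef_geom (q : ℕ) (B : ℝ) (hB : 729 < B) :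
    ∃ C : ℝ, 0 < C ∧ ∀ d, ‖cCoef d q‖ ≤ C * B^d := by
  obtain ⟨ρ, h0, h2, hK⟩ := exists_rho B hB
  refine ⟨ρ⁻¹^q, by positivity, fun d => ?_⟩
  refine (cCoef_bound q d ρ h0 h2).trans ?_
  gcongr


/-- For each `q ≥ 0`, `limsup_{d→∞} |c_{d,q}|^{1/d} ≤ 729`; equivalently, the power series
`Σ_{d≥0} c_{d,q}·z^d` has radius of convergence at least `3⁻⁶ = 1/729`. -/
theorem taylor_coefficients_growth (q : ℕ) :
    Filter.limsup (fun d : ℕ => (‖cCoef d q‖₊ : ℝ≥0∞) ^ (1 / (d : ℝ))) Filter.atTop ≤ 729 ∧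
    (∀ z : ℂ, ‖z‖ < 1 / 729 → Summable fun d : ℕ => cCoef d q * z ^ d) := by
  constructor
  · by_contra hlim
    push_neg at hlim
    rw [ENNReal.lt_iff_exists_real_btwn] at hlim
    obtain ⟨r, hr0, h729r, hrlim⟩ := hlim
    have hBr : (729:ℝ) < r := by
      by_contra h
      push_neg at h
      have : ENNReal.ofReal r ≤ (729:ℝ≥0∞) := by
        calc ENNReal.ofReal r ≤ ENNReal.ofReal 729 := ENNReal.ofReal_le_ofReal h
          _ = (729:ℝ≥0∞) := by norm_num
      exact absurd h729r (not_lt.mpr this)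
    obtain ⟨B, hB1, hB2⟩ := exists_between hBr
    obtain ⟨C, hC0, hC⟩ := cCoef_geom q B hB1
    have hB0 : (0:ℝ) < B := by linarith
    have hquot : 1 < r / B := (one_lt_div hB0).mpr hB2
    have htend := tendsto_pow_atTop_atTop_of_one_lt hquot
    have hev : ∀ᶠ d : ℕ in Filter.atTop, C ≤ (r/B)^d :=
      htend.eventually_ge_atTop C
    have hkey : ∀ᶠ d : ℕ in Filter.atTop,
        (‖cCoef d q‖₊ : ℝ≥0∞) ^ (1 / (d : ℝ)) ≤ ENNReal.ofReal r := by
      filter_upwards [hev, Filter.eventually_ge_atTop 1] with d hCd hd1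
      have hd0 : (d:ℝ) ≠ 0 := by positivity
      have hbound : ‖cCoef d q‖ ≤ r^d := by
        calc ‖cCoef d q‖ ≤ C * B^d := hC d
          _ ≤ (r/B)^d * B^d := by gcongr
          _ = r^d := by
              rw [div_pow, div_mul_cancel₀]
              positivity
      have h1 : (‖cCoef d q‖₊ : ℝ≥0∞) ≤ (ENNReal.ofReal r)^d := by
        rw [show (‖cCoef d q‖₊ : ℝ≥0∞) = ENNReal.ofReal ‖cCoef d q‖ from (ofReal_norm _).symm, ← ENNReal.ofReal_pow hr0]
        exact ENNReal.ofReal_le_ofReal hbound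
      calc (‖cCoef d q‖₊ : ℝ≥0∞) ^ (1 / (d : ℝ))
          ≤ ((ENNReal.ofReal r)^d) ^ (1 / (d : ℝ)) :=
            ENNReal.rpow_le_rpow h1 (by positivity)
        _ = ENNReal.ofReal r := by
            rw [← ENNReal.rpow_natCast, ← ENNReal.rpow_mul,
              mul_one_div, div_self hd0, ENNReal.rpow_one]
    exact absurd (Filter.limsup_le_of_le (by isBoundedDefault) hkey) (not_le.mpr hrlim)
  · intro z hz
    have hzB : ∃ B : ℝ, 729 < B ∧ B * ‖z‖ < 1 := by
      rcases eq_or_ne z 0 with rfl | hz0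
      · exact ⟨730, by norm_num, by simp⟩
      · have hz0' : 0 < ‖z‖ := norm_pos_iff.mpr hz0
        have h729 : (729:ℝ) < 1/‖z‖ := by
          rw [lt_div_iff₀ hz0']
          calc 729 * ‖z‖ < 729 * (1/729) := by
                apply mul_lt_mul_of_pos_left hz (by norm_num)
            _ = 1 := by norm_num
        obtain ⟨B, hB1, hB2⟩ := exists_between h729
        exact ⟨B, hB1, by rwa [← lt_div_iff₀ hz0']⟩
    obtain ⟨B, hB1, hBz⟩ := hzB
    obtain ⟨C, hC0, hC⟩ := cCoef_geom q B hB1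
    have hB0 : (0:ℝ) < B := by linarith
    apply Summable.of_norm_bounded (g := fun d => C * (B*‖z‖)^d)
    · exact (summable_geometric_of_lt_one (by positivity) hBz).mul_left C
    · intro d
      calc ‖cCoef d q * z^d‖ = ‖cCoef d q‖ * ‖z‖^d := by rw [norm_mul, norm_pow]
        _ ≤ C * B^d * ‖z‖^d := by gcongr; exact hC d
        _ = C * (B*‖z‖)^d := by rw [mul_pow]; ring
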